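/- arXiv:2109.04024 — 3 statements merged into one kernel-verified Lean document; each statement's English description precedes it below -/
import Mathlib

section
/- Let X and U be finite nonempty sets, K a positive integer, and L_Q ≥ 0. Let π = (π_k)_{k∈[K]} be decision rules of the form π_k : X × P(X) → P(U) (depending only on the marginal state distribution) with |π_k(x,m₁) − π_k(x,m₂)|₁ ≤ L_Q·|m₁ − m₂|₁ for all x ∈ X, k ∈ [K], m₁, m₂ ∈ P(X). For μ ∈ P(X×[K]), let μ[X] ∈ P(X) denote the marginal μ[X](x) = Σ_k μ(x,k), define ν^MF(μ,π)(u,k) = Σ_x π_k(x,μ[X])(u)·μ(x,k) ∈ P(U×[K]), and let ν^MF(μ,π)[U] be its marginal on U. Then for all μ, μ' ∈ P(X×[K]): |ν^MF(μ,π)[U] − ν^MF(μ',π)[U]|₁ ≤ |ν^MF(μ,π) − ν^MF(μ',π)|₁ ≤ |μ − μ'|₁ + L_Q·|μ[X] − μ'[X]|₁. -/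
open Finset

/-- A probability distribution on a finite type, represented as a nonnegative
function summing to one. -/
def IsProb {A : Type*} [Fintype A] (μ : A → ℝ) : Prop :=
  (∀ a, 0 ≤ μ a) ∧ ∑ a, μ a = 1

/-- The L1 distance between two real-valued functions on a finite type. -/
noncomputable def l1 {A : Type*} [Fintype A] (μ ν : A → ℝ) : ℝ :=
  ∑ a, |μ a - ν a|

/-- The marginal on `A` of a distribution on `A × Fin K`. -/
def marg {A : Type*} [Fintype A] {K : ℕ} (μ : A × Fin K → ℝ) : A → ℝ :=
  fun a => ∑ k, μ (a, k)

theorem stmt15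
    {X U : Type*} [Fintype X] [Fintype U] [Nonempty X] [Nonempty U]
    (K : ℕ) (hK : 0 < K) (LQ : ℝ) (hLQ : 0 ≤ LQ)
    (pi : Fin K → X → (X → ℝ) → U → ℝ)
    (hpiProb : ∀ k x m, IsProb m → IsProb (pi k x m))
    (hpiLip : ∀ k x m₁ m₂, IsProb m₁ → IsProb m₂ →
      l1 (pi k x m₁) (pi k x m₂) ≤ LQ * l1 m₁ m₂)
    (nuMF : (X × Fin K → ℝ) → U × Fin K → ℝ)
    (hnuMF : ∀ μ u k, nuMF μ (u, k) = ∑ x, pi k x (marg μ) u * μ (x, k))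
    (μ μ' : X × Fin K → ℝ) (hμ : IsProb μ) (hμ' : IsProb μ') :
    l1 (marg (nuMF μ)) (marg (nuMF μ')) ≤ l1 (nuMF μ) (nuMF μ') ∧
      l1 (nuMF μ) (nuMF μ') ≤ l1 μ μ' + LQ * l1 (marg μ) (marg μ') := by
  have hm : IsProb (marg μ) :=
    ⟨fun a => Finset.sum_nonneg fun k _ => hμ.1 _, by
      rw [← hμ.2, Fintype.sum_prod_type]; rfl⟩
  have hm' : IsProb (marg μ') :=
    ⟨fun a => Finset.sum_nonneg fun k _ => hμ'.1 _, by
      rw [← hμ'.2, Fintype.sum_prod_type]; rfl⟩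
  constructor
  · unfold l1 marg
    rw [Fintype.sum_prod_type]
    refine Finset.sum_le_sum fun u _ => ?_
    rw [← Finset.sum_sub_distrib]
    exact Finset.abs_sum_le_sum_abs _ _
  · have key : ∀ u k, |nuMF μ (u, k) - nuMF μ' (u, k)| ≤
        ∑ x, (pi k x (marg μ) u * |μ (x, k) - μ' (x, k)|
          + |pi k x (marg μ) u - pi k x (marg μ') u| * μ' (x, k)) := by
      intro u k
      rw [hnuMF, hnuMF, ← Finset.sum_sub_distrib]
      refine (Finset.abs_sum_le_sum_abs _ _).trans (Finset.sum_le_sum fun x _ => ?_)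
      have h1 : pi k x (marg μ) u * μ (x, k) - pi k x (marg μ') u * μ' (x, k)
          = pi k x (marg μ) u * (μ (x, k) - μ' (x, k))
            + (pi k x (marg μ) u - pi k x (marg μ') u) * μ' (x, k) := by ring
      rw [h1]
      refine (abs_add_le _ _).trans ?_
      rw [abs_mul, abs_mul, abs_of_nonneg ((hpiProb k x _ hm).1 u),
        abs_of_nonneg (hμ'.1 _)]
    have hA : ∑ k, ∑ x, ∑ u, pi k x (marg μ) u * |μ (x, k) - μ' (x, k)|
        = l1 μ μ' := by
      have : ∀ k x, ∑ u, pi k x (marg μ) u * |μ (x, k) - μ' (x, k)|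
          = |μ (x, k) - μ' (x, k)| := by
        intro k x
        rw [← Finset.sum_mul, (hpiProb k x _ hm).2, one_mul]
      simp_rw [this]
      rw [l1, Fintype.sum_prod_type, Finset.sum_comm]
    have hB : ∑ k, ∑ x, ∑ u, |pi k x (marg μ) u - pi k x (marg μ') u| * μ' (x, k)
        ≤ LQ * l1 (marg μ) (marg μ') := by
      have step : ∀ k x, ∑ u, |pi k x (marg μ) u - pi k x (marg μ') u| * μ' (x, k)
          ≤ (LQ * l1 (marg μ) (marg μ')) * μ' (x, k) := by
        intro k x
        rw [← Finset.sum_mul]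
        exact mul_le_mul_of_nonneg_right (hpiLip k x _ _ hm hm') (hμ'.1 _)
      calc ∑ k, ∑ x, ∑ u, |pi k x (marg μ) u - pi k x (marg μ') u| * μ' (x, k)
          ≤ ∑ k, ∑ x, (LQ * l1 (marg μ) (marg μ')) * μ' (x, k) :=
            Finset.sum_le_sum fun k _ => Finset.sum_le_sum fun x _ => step k x
        _ = LQ * l1 (marg μ) (marg μ') := by
            simp_rw [← Finset.mul_sum]
            rw [Finset.sum_comm, ← Fintype.sum_prod_type, hμ'.2, mul_one]
    calc l1 (nuMF μ) (nuMF μ')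
        = ∑ u, ∑ k, |nuMF μ (u, k) - nuMF μ' (u, k)| := by
          rw [l1, Fintype.sum_prod_type]
      _ ≤ ∑ u, ∑ k, ∑ x, (pi k x (marg μ) u * |μ (x, k) - μ' (x, k)|
            + |pi k x (marg μ) u - pi k x (marg μ') u| * μ' (x, k)) :=
          Finset.sum_le_sum fun u _ => Finset.sum_le_sum fun k _ => key u k
      _ = (∑ k, ∑ x, ∑ u, pi k x (marg μ) u * |μ (x, k) - μ' (x, k)|)
            + ∑ k, ∑ x, ∑ u, |pi k x (marg μ) u - pi k x (marg μ') u| * μ' (x, k) := by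
          simp_rw [Finset.sum_add_distrib]
          congr 1 <;>
          · rw [Finset.sum_comm]
            exact Finset.sum_congr rfl fun k _ => Finset.sum_comm
      _ ≤ l1 μ μ' + LQ * l1 (marg μ) (marg μ') := by rw [hA]; exact add_le_add (le_refl _) hB
end

section
/- Let X and U be finite nonempty sets, K a positive integer, and M_R, L_R, L_Q ≥ 0. Let π = (π_k)_{k∈[K]} be decision rules π_k : X × P(X) → P(U) with |π_k(x,m₁) − π_k(x,m₂)|₁ ≤ L_Q·|m₁ − m₂|₁ for all arguments. Let r_k : X × U × P(X) × P(U) → ℝ satisfy |r_k(x,u,m,n)| ≤ M_R and |r_k(x,u,m₁,n₁) − r_k(x,u,m₂,n₂)| ≤ L_R·(|m₁ − m₂|₁ + |n₁ − n₂|₁). For μ ∈ P(X×[K]) with marginal μ[X], define ν^MF(μ,π)(u,k) = Σ_x π_k(x,μ[X])(u)·μ(x,k), its U-marginal ν^MF(μ,π)[U], and r_k^MF(μ,π) = Σ_{x,u} μ(x,k)·π_k(x,μ[X])(u)·r_k(x,u,μ[X],ν^MF(μ,π)[U]). Then for all μ, μ' ∈ P(X×[K]), Σ_{k∈[K]} |r_k^MF(μ,π)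 − r_k^MF(μ',π)| ≤ S_R'·|μ − μ'|₁ + S_R''·|μ[X] − μ'[X]|₁, where S_R' = M_R + L_R and S_R'' = M_R·L_Q + L_R·(1+L_Q). -/
open Finset

lemma l1_nonneg {A : Type*} [Fintype A] (μ ν : A → ℝ) : 0 ≤ l1 μ ν :=
  Finset.sum_nonneg fun _ _ => abs_nonneg _

lemma marg_isProb {A : Type*} [Fintype A] {K : ℕ} (μ : A × Fin K → ℝ)
    (h : IsProb μ) : IsProb (marg μ) := by
  constructor
  · intro a
    exact Finset.sum_nonneg fun k _ => h.1 _
  · rw [show (∑ a, marg μ a) = ∑ a, ∑ k, μ (a, k) from rfl, ← Fintype.sum_prod_type]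
    exact h.2

lemma l1_prod {A : Type*} [Fintype A] {K : ℕ} (μ μ' : A × Fin K → ℝ) :
    l1 μ μ' = ∑ k, ∑ a, |μ (a, k) - μ' (a, k)| := by
  rw [l1, Fintype.sum_prod_type, Finset.sum_comm]

lemma ptwise (a a' p p' s s' MR C : ℝ) (hp : 0 ≤ p) (hp' : 0 ≤ p') (ha' : 0 ≤ a')
    (hs : |s| ≤ MR) (hss' : |s - s'| ≤ C) :
    |a * p * s - a' * p' * s'| ≤ (p * |a - a'| + a' * |p - p'|) * MR + a' * p' * C := by
  have h1 : |a * p - a' * p'| ≤ p * |a - a'| + a' * |p - p'| := by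
    calc |a * p - a' * p'| = |p * (a - a') + a' * (p - p')| := by ring_nf
      _ ≤ |p * (a - a')| + |a' * (p - p')| := abs_add_le _ _
      _ = p * |a - a'| + a' * |p - p'| := by
          rw [abs_mul, abs_mul, abs_of_nonneg hp, abs_of_nonneg ha']
  calc |a * p * s - a' * p' * s'|
      = |(a * p - a' * p') * s + a' * p' * (s - s')| := by ring_nf
    _ ≤ |(a * p - a' * p') * s| + |a' * p' * (s - s')| := abs_add_le _ _
    _ = |a * p - a' * p'| * |s| + a' * p' * |s - s'| := by
        rw [abs_mul, abs_mul, abs_mul, abs_of_nonneg ha', abs_of_nonneg hp']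
    _ ≤ (p * |a - a'| + a' * |p - p'|) * MR + a' * p' * C := by
        refine add_le_add (mul_le_mul h1 hs (abs_nonneg _) ?_)
          (mul_le_mul_of_nonneg_left hss' (mul_nonneg ha' hp'))
        positivity

theorem stmt16
    {X U : Type*} [Fintype X] [Fintype U] [Nonempty X] [Nonempty U]
    (K : ℕ) (hK : 0 < K)
    (MR LR LQ : ℝ) (hMR : 0 ≤ MR) (hLR : 0 ≤ LR) (hLQ : 0 ≤ LQ)
    (pi : Fin K → X → (X → ℝ) → U → ℝ)
    (hpiProb : ∀ k x m, IsProb m → IsProb (pi k x m))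
    (hpiLip : ∀ k x m₁ m₂, IsProb m₁ → IsProb m₂ →
      l1 (pi k x m₁) (pi k x m₂) ≤ LQ * l1 m₁ m₂)
    (r : Fin K → X → U → (X → ℝ) → (U → ℝ) → ℝ)
    (hrBdd : ∀ k x u m n, IsProb m → IsProb n → |r k x u m n| ≤ MR)
    (hrLip : ∀ k x u m₁ n₁ m₂ n₂, IsProb m₁ → IsProb n₁ → IsProb m₂ → IsProb n₂ →
      |r k x u m₁ n₁ - r k x u m₂ n₂| ≤ LR * (l1 m₁ m₂ + l1 n₁ n₂))
    (nuMF : (X × Fin K → ℝ) → U × Fin K → ℝ)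
    (hnuMF : ∀ μ u k, nuMF μ (u, k) = ∑ x, pi k x (marg μ) u * μ (x, k))
    (rMF : (X × Fin K → ℝ) → Fin K → ℝ)
    (hrMF : ∀ μ k, rMF μ k =
      ∑ x, ∑ u, μ (x, k) * pi k x (marg μ) u * r k x u (marg μ) (marg (nuMF μ)))
    (μ μ' : X × Fin K → ℝ) (hμ : IsProb μ) (hμ' : IsProb μ') :
    ∑ k, |rMF μ k - rMF μ' k|
      ≤ (MR + LR) * l1 μ μ' + (MR * LQ + LR * (1 + LQ)) * l1 (marg μ) (marg μ') := by
  classical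
  have hmP : IsProb (marg μ) := marg_isProb μ hμ
  have hmP' : IsProb (marg μ') := marg_isProb μ' hμ'
  -- ν's are probabilities
  have hνP : ∀ (σ : X × Fin K → ℝ), IsProb σ → IsProb (nuMF σ) := by
    intro σ hσ
    have hmσ : IsProb (marg σ) := marg_isProb σ hσ
    constructor
    · rintro ⟨u, k⟩
      rw [hnuMF]
      exact Finset.sum_nonneg fun x _ =>
        mul_nonneg ((hpiProb k x _ hmσ).1 u) (hσ.1 _)
    · calc (∑ p : U × Fin K, nuMF σ p)
          = ∑ u, ∑ k, ∑ x, pi k x (marg σ) u * σ (x, k) := by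
            rw [Fintype.sum_prod_type]
            exact Finset.sum_congr rfl fun u _ => Finset.sum_congr rfl fun k _ => hnuMF σ u k
        _ = ∑ k, ∑ x, ∑ u, pi k x (marg σ) u * σ (x, k) := by
            rw [Finset.sum_comm]
            exact Finset.sum_congr rfl fun k _ => Finset.sum_comm
        _ = ∑ k, ∑ x, σ (x, k) := by
            refine Finset.sum_congr rfl fun k _ => Finset.sum_congr rfl fun x _ => ?_
            rw [← Finset.sum_mul, (hpiProb k x _ hmσ).2, one_mul]
        _ = 1 := by
            rw [Finset.sum_comm, ← Fintype.sum_prod_type]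
            exact hσ.2
  have hnP : IsProb (marg (nuMF μ)) := marg_isProb _ (hνP μ hμ)
  have hnP' : IsProb (marg (nuMF μ')) := marg_isProb _ (hνP μ' hμ')
  set Dm := l1 (marg μ) (marg μ') with hDm
  set Dn := l1 (marg (nuMF μ)) (marg (nuMF μ')) with hDn
  set Dμ := l1 μ μ' with hDμ
  have hDm0 : 0 ≤ Dm := l1_nonneg _ _
  have hDμ0 : 0 ≤ Dμ := l1_nonneg _ _
  -- pointwise product bound, used twice
  have hprod : ∀ (k : Fin K) (x : X) (u : U),
      |pi k x (marg μ) u * μ (x, k) - pi k x (marg μ') u * μ' (x, k)|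
        ≤ pi k x (marg μ) u * |μ (x, k) - μ' (x, k)|
          + μ' (x, k) * |pi k x (marg μ) u - pi k x (marg μ') u| := by
    intro k x u
    calc |pi k x (marg μ) u * μ (x, k) - pi k x (marg μ') u * μ' (x, k)|
        = |pi k x (marg μ) u * (μ (x, k) - μ' (x, k))
            + μ' (x, k) * (pi k x (marg μ) u - pi k x (marg μ') u)| := by ring_nf
      _ ≤ |pi k x (marg μ) u * (μ (x, k) - μ' (x, k))|
            + |μ' (x, k) * (pi k x (marg μ) u - pi k x (marg μ') u)| := abs_add_le _ _
      _ = pi k x (marg μ) u * |μ (x, k) - μ' (x, k)|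
            + μ' (x, k) * |pi k x (marg μ) u - pi k x (marg μ') u| := by
          rw [abs_mul, abs_mul, abs_of_nonneg ((hpiProb k x _ hmP).1 u),
            abs_of_nonneg (hμ'.1 _)]
  -- bound on Dn
  have hDnB : Dn ≤ Dμ + LQ * Dm := by
    have step : ∀ u : U, |marg (nuMF μ) u - marg (nuMF μ') u|
        ≤ ∑ k, ∑ x, (pi k x (marg μ) u * |μ (x, k) - μ' (x, k)|
            + μ' (x, k) * |pi k x (marg μ) u - pi k x (marg μ') u|) := by
      intro u
      have : marg (nuMF μ) u - marg (nuMF μ') u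
          = ∑ k, ∑ x, (pi k x (marg μ) u * μ (x, k) - pi k x (marg μ') u * μ' (x, k)) := by
        rw [marg, marg, ← Finset.sum_sub_distrib]
        refine Finset.sum_congr rfl fun k _ => ?_
        rw [hnuMF, hnuMF, ← Finset.sum_sub_distrib]
      rw [this]
      calc |∑ k, ∑ x, (pi k x (marg μ) u * μ (x, k) - pi k x (marg μ') u * μ' (x, k))|
          ≤ ∑ k, ∑ x, |pi k x (marg μ) u * μ (x, k) - pi k x (marg μ') u * μ' (x, k)| := by
            refine (Finset.abs_sum_le_sum_abs _ _).trans ?_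
            exact Finset.sum_le_sum fun k _ => Finset.abs_sum_le_sum_abs _ _
        _ ≤ _ := Finset.sum_le_sum fun k _ => Finset.sum_le_sum fun x _ => hprod k x u
    calc Dn ≤ ∑ u, ∑ k, ∑ x, (pi k x (marg μ) u * |μ (x, k) - μ' (x, k)|
            + μ' (x, k) * |pi k x (marg μ) u - pi k x (marg μ') u|) :=
          Finset.sum_le_sum fun u _ => step u
      _ = ∑ k, ∑ x, ∑ u, (pi k x (marg μ) u * |μ (x, k) - μ' (x, k)|
            + μ' (x, k) * |pi k x (marg μ) u - pi k x (marg μ') u|) := by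
          rw [Finset.sum_comm]
          exact Finset.sum_congr rfl fun k _ => Finset.sum_comm
      _ = ∑ k, ∑ x, (|μ (x, k) - μ' (x, k)|
            + μ' (x, k) * l1 (pi k x (marg μ)) (pi k x (marg μ'))) := by
          refine Finset.sum_congr rfl fun k _ => Finset.sum_congr rfl fun x _ => ?_
          rw [Finset.sum_add_distrib, ← Finset.sum_mul, (hpiProb k x _ hmP).2, one_mul,
            ← Finset.mul_sum, l1]
      _ ≤ ∑ k, ∑ x, (|μ (x, k) - μ' (x, k)| + μ' (x, k) * (LQ * Dm)) := by
          refine Finset.sum_le_sum fun k _ => Finset.sum_le_sum fun x _ => ?_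
          exact add_le_add le_rfl
            (mul_le_mul_of_nonneg_left (hpiLip k x _ _ hmP hmP') (hμ'.1 _))
      _ = Dμ + LQ * Dm := by
          have h1 : (∑ k, ∑ x, μ' (x, k)) = 1 := by
            rw [Finset.sum_comm, ← Fintype.sum_prod_type]; exact hμ'.2
          simp only [Finset.sum_add_distrib, ← Finset.sum_mul]
          rw [h1, one_mul, ← l1_prod, hDμ]
  -- per-k bound
  have hk : ∀ k : Fin K, |rMF μ k - rMF μ' k|
      ≤ ∑ x, (MR * |μ (x, k) - μ' (x, k)|
          + (MR * (LQ * Dm) + LR * (Dm + Dn)) * μ' (x, k)) := by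
    intro k
    rw [hrMF, hrMF]
    simp only [← Finset.sum_sub_distrib]
    have hxu : ∀ x u,
        |μ (x, k) * pi k x (marg μ) u * r k x u (marg μ) (marg (nuMF μ))
          - μ' (x, k) * pi k x (marg μ') u * r k x u (marg μ') (marg (nuMF μ'))|
        ≤ (pi k x (marg μ) u * |μ (x, k) - μ' (x, k)|
            + μ' (x, k) * |pi k x (marg μ) u - pi k x (marg μ') u|) * MR
          + μ' (x, k) * pi k x (marg μ') u * (LR * (Dm + Dn)) := by
      intro x u
      exact ptwise (μ (x, k)) (μ' (x, k)) (pi k x (marg μ) u) (pi k x (marg μ') u)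
        (r k x u (marg μ) (marg (nuMF μ))) (r k x u (marg μ') (marg (nuMF μ')))
        MR (LR * (Dm + Dn))
        ((hpiProb k x _ hmP).1 u) ((hpiProb k x _ hmP').1 u) (hμ'.1 _)
        (hrBdd k x u _ _ hmP hnP)
        (hrLip k x u _ _ _ _ hmP hnP hmP' hnP')
    calc |∑ x, ∑ u, (μ (x, k) * pi k x (marg μ) u * r k x u (marg μ) (marg (nuMF μ))
            - μ' (x, k) * pi k x (marg μ') u * r k x u (marg μ') (marg (nuMF μ')))|
        ≤ ∑ x, ∑ u, |μ (x, k) * pi k x (marg μ) u * r k x u (marg μ) (marg (nuMF μ))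
            - μ' (x, k) * pi k x (marg μ') u * r k x u (marg μ') (marg (nuMF μ'))| := by
          refine (Finset.abs_sum_le_sum_abs _ _).trans ?_
          exact Finset.sum_le_sum fun x _ => Finset.abs_sum_le_sum_abs _ _
      _ ≤ ∑ x, ∑ u, ((pi k x (marg μ) u * |μ (x, k) - μ' (x, k)|
              + μ' (x, k) * |pi k x (marg μ) u - pi k x (marg μ') u|) * MR
            + μ' (x, k) * pi k x (marg μ') u * (LR * (Dm + Dn))) :=
          Finset.sum_le_sum fun x _ => Finset.sum_le_sum fun u _ => hxu x u
      _ = ∑ x, ((|μ (x, k) - μ' (x, k)|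
              + μ' (x, k) * l1 (pi k x (marg μ)) (pi k x (marg μ'))) * MR
            + μ' (x, k) * (LR * (Dm + Dn))) := by
          refine Finset.sum_congr rfl fun x _ => ?_
          rw [Finset.sum_add_distrib]
          congr 1
          · rw [← Finset.sum_mul]
            congr 1
            rw [Finset.sum_add_distrib, ← Finset.sum_mul, (hpiProb k x _ hmP).2, one_mul,
              ← Finset.mul_sum, l1]
          · have e1 : (∑ u, μ' (x, k) * pi k x (marg μ') u * (LR * (Dm + Dn)))
                = (∑ u, pi k x (marg μ') u) * (μ' (x, k) * (LR * (Dm + Dn))) := by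
              rw [Finset.sum_mul]
              exact Finset.sum_congr rfl fun u _ => by ring
            rw [e1, (hpiProb k x _ hmP').2, one_mul]
      _ ≤ ∑ x, (MR * |μ (x, k) - μ' (x, k)|
            + (MR * (LQ * Dm) + LR * (Dm + Dn)) * μ' (x, k)) := by
          refine Finset.sum_le_sum fun x _ => ?_
          have hl : μ' (x, k) * l1 (pi k x (marg μ)) (pi k x (marg μ'))
              ≤ μ' (x, k) * (LQ * Dm) :=
            mul_le_mul_of_nonneg_left (hpiLip k x _ _ hmP hmP') (hμ'.1 _)
          nlinarith [hμ'.1 (x, k), abs_nonneg (μ (x, k) - μ' (x, k))]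
  -- sum the per-k bound
  have hsum : ∑ k, |rMF μ k - rMF μ' k|
      ≤ MR * Dμ + (MR * (LQ * Dm) + LR * (Dm + Dn)) := by
    calc ∑ k, |rMF μ k - rMF μ' k|
        ≤ ∑ k, ∑ x, (MR * |μ (x, k) - μ' (x, k)|
            + (MR * (LQ * Dm) + LR * (Dm + Dn)) * μ' (x, k)) :=
          Finset.sum_le_sum fun k _ => hk k
      _ = MR * (∑ k, ∑ x, |μ (x, k) - μ' (x, k)|)
            + (MR * (LQ * Dm) + LR * (Dm + Dn)) * (∑ k, ∑ x, μ' (x, k)) := by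
          simp only [Finset.sum_add_distrib, ← Finset.mul_sum, ← Finset.sum_mul]
      _ = MR * Dμ + (MR * (LQ * Dm) + LR * (Dm + Dn)) := by
          have h1 : (∑ k, ∑ x, μ' (x, k)) = 1 := by
            rw [Finset.sum_comm, ← Fintype.sum_prod_type]; exact hμ'.2
          rw [h1, mul_one, ← l1_prod, ← hDμ]
  have := hDnB
  nlinarith [hsum, mul_le_mul_of_nonneg_left hDnB hLR]
end

section
/- Let U be a finite nonempty set, K a positive integer, and N_1,...,N_K positive integers. For each k ∈ [K] and j ∈ [N_k], let u_{j,k} be a U-valued random variable on a common probability space, and assume the family (u_{j,k})_{j∈[N_k], k∈[K]} is mutually independent. Define the classwise empirical distribution ν̄^N(u,k) = (1/N_k)·Σ_{j=1}^{N_k} 1{u_{j,k} = u} and its mean ν̂(u,k) = (1/N_k)·Σ_{j=1}^{N_k} P(u_{j,k} = u). Then E[ Σ_{k∈[K]} Σ_{u∈U} |ν̄^N(u,k) − ν̂(u,k)| ] ≤ (Σ_{k∈[K]} 1/√N_k)·√|U|. -/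
open MeasureTheory ProbabilityTheory Finset

lemma my_integral_abs_le_sqrt {Ω : Type*} [MeasurableSpace Ω] {P : Measure Ω}
    [IsProbabilityMeasure P] {Y : Ω → ℝ} (hY : MemLp Y 2 P) :
    ∫ ω, |Y ω| ∂P ≤ Real.sqrt (∫ ω, Y ω ^ 2 ∂P) := by
  have hconj : Real.HolderConjugate 2 2 := .two_two
  have h2 : (ENNReal.ofReal (2:ℝ)) = 2 := by norm_num
  have h := integral_mul_le_Lp_mul_Lq_of_nonneg (μ := P) hconj
    (f := fun ω => |Y ω|) (g := fun _ => (1:ℝ))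
    (ae_of_all _ fun ω => abs_nonneg _) (ae_of_all _ fun _ => zero_le_one)
    (h2 ▸ hY.abs) (h2 ▸ memLp_const 1)
  simp only [mul_one, Real.rpow_two, sq_abs, one_pow, integral_const,
    measure_univ, probReal_univ, ENNReal.toReal_one, smul_eq_mul, one_mul, Real.one_rpow] at h
  rwa [← Real.sqrt_eq_rpow] at h

theorem stmt18 {Ω : Type*} [MeasurableSpace Ω] (P : Measure Ω) [IsProbabilityMeasure P]
    {U : Type*} [Fintype U] [Nonempty U] [DecidableEq U]
    [MeasurableSpace U] [MeasurableSingletonClass U]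
    (K : ℕ) (hK : 0 < K) (N : Fin K → ℕ) (hN : ∀ k, 0 < N k)
    (u : (k : Fin K) → Fin (N k) → Ω → U)
    (hmeas : ∀ k j, Measurable (u k j))
    (hindep : iIndepFun
      (fun p : Σ k : Fin K, Fin (N k) => u p.1 p.2) P)
    (νN : Ω → U × Fin K → ℝ)
    (hνN : ∀ ω u0 k, νN ω (u0, k) = (∑ j, if u k j ω = u0 then (1 : ℝ) else 0) / (N k : ℝ))
    (νhat : U × Fin K → ℝ)
    (hνhat : ∀ u0 k, νhat (u0, k) = (∑ j, (P {ω | u k j ω = u0}).toReal) / (N k : ℝ)) :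
    ∫ ω, ∑ k, ∑ u0 : U, |νN ω (u0, k) - νhat (u0, k)| ∂P
      ≤ (∑ k, 1 / Real.sqrt (N k)) * Real.sqrt (Fintype.card U) := by
  classical
  have hXmble : ∀ (k : Fin K) (j : Fin (N k)) (u0 : U),
      Measurable (fun ω => if u k j ω = u0 then (1:ℝ) else 0) := fun k j u0 =>
    Measurable.ite (hmeas k j (measurableSet_singleton u0)) measurable_const measurable_const
  have hXmem : ∀ (k : Fin K) (j : Fin (N k)) (u0 : U),
      MemLp (fun ω => if u k j ω = u0 then (1:ℝ) else 0) 2 P := by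
    intro k j u0
    refine MemLp.of_bound (hXmble k j u0).aestronglyMeasurable 1 (ae_of_all _ fun ω => ?_)
    by_cases h : u k j ω = u0 <;> simp [h]
  have hXint : ∀ (k : Fin K) (j : Fin (N k)) (u0 : U),
      ∫ ω, (if u k j ω = u0 then (1:ℝ) else 0) ∂P = (P {ω | u k j ω = u0}).toReal := by
    intro k j u0
    have heq : (fun ω => if u k j ω = u0 then (1:ℝ) else 0)
        = (u k j ⁻¹' {u0}).indicator (fun _ => (1:ℝ)) := by
      funext ω; simp [Set.indicator_apply, Set.mem_preimage]
    rw [heq, integral_indicator_const _ (hmeas k j (measurableSet_singleton u0))]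
    simp only [smul_eq_mul, mul_one]
    rfl
  have key : ∀ k : Fin K, ∑ u0 : U, ∫ ω, |νN ω (u0, k) - νhat (u0, k)| ∂P
      ≤ (1 / Real.sqrt (N k)) * Real.sqrt (Fintype.card U) := by
    intro k
    set p : Fin (N k) → U → ℝ := fun j u0 => (P {ω | u k j ω = u0}).toReal with hp
    have hpnn : ∀ j u0, 0 ≤ p j u0 := fun j u0 => ENNReal.toReal_nonneg
    -- variance of each indicator
    have hvar : ∀ (j : Fin (N k)) (u0 : U),
        variance (fun ω => if u k j ω = u0 then (1:ℝ) else 0) P ≤ p j u0 := by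
      intro j u0
      rw [variance_eq_sub (hXmem k j u0)]
      have hsq : (fun ω => if u k j ω = u0 then (1:ℝ) else 0) ^ 2
          = fun ω => if u k j ω = u0 then (1:ℝ) else 0 := by
        funext ω; by_cases h : u k j ω = u0 <;> simp [h]
      rw [hsq, hXint k j u0]
      have h1 : (P {ω | u k j ω = u0}).toReal = p j u0 := rfl
      rw [h1]
      nlinarith [hpnn j u0]
    -- pairwise independence and variance of the sum
    have hVsum : ∀ u0 : U,
        variance (∑ j, fun ω => if u k j ω = u0 then (1:ℝ) else 0) P
          = ∑ j, variance (fun ω => if u k j ω = u0 then (1:ℝ) else 0) P := by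
      intro u0
      refine IndepFun.variance_sum (fun j _ => hXmem k j u0) ?_
      intro i _ j _ hij
      have hne : (⟨k, i⟩ : Σ k, Fin (N k)) ≠ ⟨k, j⟩ := by
        intro h; exact hij (eq_of_heq (Sigma.mk.inj_iff.mp h).2)
      have hφ : Measurable (fun v : U => if v = u0 then (1:ℝ) else 0) :=
        Measurable.ite (measurableSet_singleton u0) measurable_const measurable_const
      exact (hindep.indepFun hne).comp hφ hφ
    -- bound on each expected deviation
    have hdiff : ∀ u0 : U, ∫ ω, |νN ω (u0, k) - νhat (u0, k)| ∂P
        ≤ Real.sqrt (∑ j, p j u0) / (N k : ℝ) := by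
      intro u0
      set S : Ω → ℝ := ∑ j, fun ω => if u k j ω = u0 then (1:ℝ) else 0 with hS
      have hSapp : ∀ ω, S ω = ∑ j, if u k j ω = u0 then (1:ℝ) else 0 := by
        intro ω; rw [hS]; simp [Finset.sum_apply]
      have hSmem : MemLp S 2 P := memLp_finset_sum' _ (fun j _ => hXmem k j u0)
      have hES : ∫ ω, S ω ∂P = ∑ j, p j u0 := by
        have h1 : ∫ ω, S ω ∂P = ∫ ω, ∑ j, (if u k j ω = u0 then (1:ℝ) else 0) ∂P :=
          integral_congr_ae (ae_of_all _ fun ω => hSapp ω)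
        rw [h1, integral_finset_sum _ (fun j _ => (hXmem k j u0).integrable one_le_two)]
        exact Finset.sum_congr rfl fun j _ => hXint k j u0
      have hNpos : (0:ℝ) < (N k : ℝ) := by exact_mod_cast hN k
      have hrw : ∀ ω, νN ω (u0, k) - νhat (u0, k) = (S ω - ∫ ω', S ω' ∂P) / (N k : ℝ) := by
        intro ω
        rw [hνN, hνhat, hES, hSapp, sub_div]
      have hmemY : MemLp (fun ω => S ω - ∫ ω', S ω' ∂P) 2 P := by
        have := hSmem.sub (memLp_const (∫ ω', S ω' ∂P))
        exact this
      calc ∫ ω, |νN ω (u0, k) - νhat (u0, k)| ∂P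
          = ∫ ω, |S ω - ∫ ω', S ω' ∂P| / (N k : ℝ) ∂P := by
            refine integral_congr_ae (ae_of_all _ fun ω => ?_)
            show |νN ω (u0, k) - νhat (u0, k)| = |S ω - ∫ ω', S ω' ∂P| / (N k : ℝ)
            rw [hrw ω, abs_div, abs_of_nonneg hNpos.le]
        _ = (∫ ω, |S ω - ∫ ω', S ω' ∂P| ∂P) / (N k : ℝ) := integral_div _ _
        _ ≤ Real.sqrt (∫ ω, (S ω - ∫ ω', S ω' ∂P) ^ 2 ∂P) / (N k : ℝ) := by
            gcongr
            exact my_integral_abs_le_sqrt hmemY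
        _ = Real.sqrt (variance S P) / (N k : ℝ) := by
            congr 1
            rw [variance_eq_integral hSmem.aemeasurable]
        _ ≤ Real.sqrt (∑ j, p j u0) / (N k : ℝ) := by
            gcongr
            rw [hS, hVsum u0]
            exact Finset.sum_le_sum fun j _ => hvar j u0
    -- total mass
    have hsum_p : ∀ j : Fin (N k), ∑ u0 : U, p j u0 = 1 := by
      intro j
      have hm : ∀ y ∈ (univ : Finset U), MeasurableSet (u k j ⁻¹' {y}) :=
        fun y _ => hmeas k j (measurableSet_singleton y)
      have hs := sum_measure_preimage_singleton (μ := P) (univ : Finset U) hm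
      have h1 : ∑ u0 : U, P {ω | u k j ω = u0} = 1 := by
        have : u k j ⁻¹' ↑(univ : Finset U) = Set.univ := by simp
        rw [this] at hs
        rw [measure_univ] at hs; exact hs
      calc ∑ u0 : U, p j u0 = (∑ u0 : U, P {ω | u k j ω = u0}).toReal :=
            (ENNReal.toReal_sum fun _ _ => measure_ne_top _ _).symm
        _ = 1 := by rw [h1]; simp
    -- Cauchy–Schwarz over U
    have hNpos : (0:ℝ) < (N k : ℝ) := by exact_mod_cast hN k
    have hCS : ∑ u0 : U, Real.sqrt (∑ j, p j u0)
        ≤ Real.sqrt (Fintype.card U) * Real.sqrt (N k) := by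
      have hsumV : ∑ u0 : U, Real.sqrt (∑ j, p j u0) ^ 2 = (N k : ℝ) := by
        have hterm : ∀ u0 : U, Real.sqrt (∑ j, p j u0) ^ 2 = ∑ j, p j u0 :=
          fun u0 => Real.sq_sqrt (Finset.sum_nonneg fun j _ => hpnn j u0)
        rw [Finset.sum_congr rfl fun u0 _ => hterm u0, Finset.sum_comm]
        simp [hsum_p]
      have h := sum_mul_sq_le_sq_mul_sq (univ : Finset U) (fun _ => (1:ℝ))
        (fun u0 => Real.sqrt (∑ j, p j u0))
      simp only [one_mul, one_pow, Finset.sum_const, Finset.card_univ, nsmul_eq_mul,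
        mul_one] at h
      rw [hsumV] at h
      have hnn : 0 ≤ ∑ u0 : U, Real.sqrt (∑ j, p j u0) :=
        Finset.sum_nonneg fun _ _ => Real.sqrt_nonneg _
      rw [← Real.sqrt_mul (by positivity)]
      rw [show (∑ u0 : U, Real.sqrt (∑ j, p j u0))
          = Real.sqrt ((∑ u0 : U, Real.sqrt (∑ j, p j u0)) ^ 2) from
        (Real.sqrt_sq hnn).symm]
      exact Real.sqrt_le_sqrt h
    have hsqrtN : Real.sqrt (N k) * Real.sqrt (N k) = (N k : ℝ) :=
      Real.mul_self_sqrt hNpos.le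
    calc ∑ u0 : U, ∫ ω, |νN ω (u0, k) - νhat (u0, k)| ∂P
        ≤ ∑ u0 : U, Real.sqrt (∑ j, p j u0) / (N k : ℝ) :=
          Finset.sum_le_sum fun u0 _ => hdiff u0
      _ = (∑ u0 : U, Real.sqrt (∑ j, p j u0)) / (N k : ℝ) := by rw [Finset.sum_div]
      _ ≤ (Real.sqrt (Fintype.card U) * Real.sqrt (N k)) / (N k : ℝ) := by gcongr
      _ = (1 / Real.sqrt (N k)) * Real.sqrt (Fintype.card U) := by
          have h0 : Real.sqrt (N k) ≠ 0 := by positivity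
          field_simp
          rw [sq, hsqrtN]
  -- assemble
  have hint : ∀ (k : Fin K) (u0 : U),
      Integrable (fun ω => |νN ω (u0, k) - νhat (u0, k)|) P := by
    intro k u0
    have hfun : (fun ω => |νN ω (u0, k) - νhat (u0, k)|)
        = fun ω => |(∑ j, if u k j ω = u0 then (1:ℝ) else 0) / (N k : ℝ) - νhat (u0, k)| := by
      funext ω; rw [hνN]
    rw [hfun]
    refine Integrable.abs (Integrable.sub ?_ (integrable_const _))
    exact (integrable_finset_sum _ fun j _ => (hXmem k j u0).integrable one_le_two).div_const _
  rw [integral_finset_sum _ (fun k _ => integrable_finset_sum _ fun u0 _ => hint k u0)]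
  calc ∑ k, ∫ ω, ∑ u0 : U, |νN ω (u0, k) - νhat (u0, k)| ∂P
      = ∑ k, ∑ u0 : U, ∫ ω, |νN ω (u0, k) - νhat (u0, k)| ∂P := by
        exact Finset.sum_congr rfl fun k _ =>
          integral_finset_sum _ fun u0 _ => hint k u0
    _ ≤ ∑ k, (1 / Real.sqrt (N k)) * Real.sqrt (Fintype.card U) :=
        Finset.sum_le_sum fun k _ => key k
    _ = (∑ k, 1 / Real.sqrt (N k)) * Real.sqrt (Fintype.card U) := by
        rw [Finset.sum_mul]
end
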